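/- Let ζ_0, ζ_1, ζ_2, … be independent real-valued random variables such that ζ_1, ζ_2, … are identically distributed. Define x_*^{ζ_0} := sup{x ∈ ℝ : P(ζ_0 ≤ x) < 1} and x_*^{ζ_1} := sup{x ∈ ℝ : P(ζ_1 ≤ x) < 1}. Then P(ζ_0 > max_{1≤k≤n} ζ_k) → 0 as n → ∞ if and only if both of the following hold: (i) x_*^{ζ_0} ≤ x_*^{ζ_1}, and (ii) if P(ζ_0 = x_*^{ζ_1}) > 0 then P(ζ_1 = x_*^{ζ_1}) > 0 (here condition (ii) is only relevant when x_*^{ζ_1} < ∞). -/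

import Mathlib

open MeasureTheory ProbabilityTheory Filter

/-- Let `ζ₀, ζ₁, ζ₂, …` be independent real random variables with
`ζ₁, ζ₂, …` identically distributed, and let `x₀* = sup {x | P(ζ₀ ≤ x) < 1}` and
`x₁* = sup {x | P(ζ₁ ≤ x) < 1}` (right endpoints, as extended reals).  Then
`P(ζ₀ > max_{1 ≤ k ≤ n} ζ_k) → 0` iff `x₀* ≤ x₁*` and
(`P(ζ₀ = x₁*) > 0` implies `P(ζ₁ = x₁*) > 0`). -/
theorem exceed_max_tendsto_zero_iff
    {Ω : Type*} [MeasurableSpace Ω] (P : Measure Ω) [IsProbabilityMeasure P]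
    (ζ : ℕ → Ω → ℝ)
    (hmeas : ∀ n, Measurable (ζ n))
    (hindep : iIndepFun ζ P)
    (hid : ∀ n, 1 ≤ n → IdentDistrib (ζ n) (ζ 1) P P)
    (x₀ x₁ : EReal)
    (hx₀ : x₀ = sSup {y : EReal | ∃ x : ℝ, y = (x : EReal) ∧ P {ω | ζ 0 ω ≤ x} < 1})
    (hx₁ : x₁ = sSup {y : EReal | ∃ x : ℝ, y = (x : EReal) ∧ P {ω | ζ 1 ω ≤ x} < 1}) :
    Tendsto (fun n : ℕ => P {ω | ∀ k, 1 ≤ k → k ≤ n → ζ k ω < ζ 0 ω}) atTop (nhds 0) ↔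
      (x₀ ≤ x₁ ∧
        (0 < P {ω | (ζ 0 ω : EReal) = x₁} → 0 < P {ω | (ζ 1 ω : EReal) = x₁})) := by
  -- basic measurability
  have hIic : ∀ (j : ℕ) (x : ℝ), MeasurableSet {ω | ζ j ω ≤ x} := by
    intro j x
    exact (hmeas j) measurableSet_Iic
  have hIio : ∀ (j : ℕ) (x : ℝ), MeasurableSet {ω | ζ j ω < x} := by
    intro j x
    exact (hmeas j) measurableSet_Iio
  -- identdistrib transfers
  have hidIic : ∀ k, 1 ≤ k → ∀ x : ℝ, P {ω | ζ k ω ≤ x} = P {ω | ζ 1 ω ≤ x} := by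
    intro k hk x
    exact (hid k hk).measure_mem_eq measurableSet_Iic
  have hidIio : ∀ k, 1 ≤ k → ∀ x : ℝ, P {ω | ζ k ω < x} = P {ω | ζ 1 ω < x} := by
    intro k hk x
    exact (hid k hk).measure_mem_eq measurableSet_Iio
  have hidIci : ∀ k, 1 ≤ k → ∀ x : ℝ, P {ω | x ≤ ζ k ω} = P {ω | x ≤ ζ 1 ω} := by
    intro k hk x
    exact (hid k hk).measure_mem_eq measurableSet_Ici
  -- F1 : above the sup, the cdf equals 1
  have hF1 : ∀ x : ℝ, x₁ < (x : EReal) → P {ω | ζ 1 ω ≤ x} = 1 := by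
    intro x hx
    by_contra h
    have h1 : P {ω | ζ 1 ω ≤ x} < 1 := lt_of_le_of_ne prob_le_one h
    have : (x : EReal) ≤ x₁ := hx₁ ▸ le_sSup ⟨x, rfl, h1⟩
    exact absurd hx (not_lt.2 this)
  have hF1' : ∀ x : ℝ, x₀ < (x : EReal) → P {ω | ζ 0 ω ≤ x} = 1 := by
    intro x hx
    by_contra h
    have h1 : P {ω | ζ 0 ω ≤ x} < 1 := lt_of_le_of_ne prob_le_one h
    have : (x : EReal) ≤ x₀ := hx₀ ▸ le_sSup ⟨x, rfl, h1⟩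
    exact absurd hx (not_lt.2 this)
  have hF2 : ∀ x : ℝ, (x : EReal) < x₁ → P {ω | ζ 1 ω ≤ x} < 1 := by
    intro x hx
    rw [hx₁] at hx
    obtain ⟨y, hy, hxy⟩ := lt_sSup_iff.mp hx
    obtain ⟨x', rfl, hx'⟩ := hy
    have hxx' : x ≤ x' := by exact_mod_cast hxy.le
    exact lt_of_le_of_lt (measure_mono fun ω h => le_trans h hxx') hx'
  -- strict inequality above the sup gives null tails
  have hgt1 : ∀ c : ℝ, x₁ ≤ (c : EReal) → P {ω | c < ζ 1 ω} = 0 := by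
    intro c hc
    have : {ω | c < ζ 1 ω} ⊆ ⋃ (q : ℚ) (_ : c < (q : ℝ)), {ω | (q : ℝ) < ζ 1 ω} := by
      intro ω hω
      simp only [Set.mem_setOf_eq] at hω
      obtain ⟨q, hq1, hq2⟩ := exists_rat_btwn hω
      exact Set.mem_iUnion.2 ⟨q, Set.mem_iUnion.2 ⟨hq1, hq2⟩⟩
    refine measure_mono_null this (measure_iUnion_null fun q => measure_iUnion_null fun hq => ?_)
    have h1 : P {ω | ζ 1 ω ≤ (q : ℝ)} = 1 := by
      apply hF1
      calc x₁ ≤ (c : EReal) := hc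
        _ < ((q : ℝ) : EReal) := EReal.coe_lt_coe_iff.mpr hq
    have : {ω | (q : ℝ) < ζ 1 ω} = {ω | ζ 1 ω ≤ (q : ℝ)}ᶜ := by
      ext ω; simp [not_le]
    rw [this, prob_compl_eq_zero_iff (hIic 1 q)]
    exact h1
  have hgt0 : ∀ c : ℝ, x₀ ≤ (c : EReal) → P {ω | c < ζ 0 ω} = 0 := by
    intro c hc
    have : {ω | c < ζ 0 ω} ⊆ ⋃ (q : ℚ) (_ : c < (q : ℝ)), {ω | (q : ℝ) < ζ 0 ω} := by
      intro ω hω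
      simp only [Set.mem_setOf_eq] at hω
      obtain ⟨q, hq1, hq2⟩ := exists_rat_btwn hω
      exact Set.mem_iUnion.2 ⟨q, Set.mem_iUnion.2 ⟨hq1, hq2⟩⟩
    refine measure_mono_null this (measure_iUnion_null fun q => measure_iUnion_null fun hq => ?_)
    have h1 : P {ω | ζ 0 ω ≤ (q : ℝ)} = 1 := by
      apply hF1'
      calc x₀ ≤ (c : EReal) := hc
        _ < ((q : ℝ) : EReal) := EReal.coe_lt_coe_iff.mpr hq
    have : {ω | (q : ℝ) < ζ 0 ω} = {ω | ζ 0 ω ≤ (q : ℝ)}ᶜ := by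
      ext ω; simp [not_le]
    rw [this, prob_compl_eq_zero_iff (hIic 0 q)]
    exact h1
  -- x₁ ≠ ⊥
  have hbot : x₁ ≠ ⊥ := by
    intro hb
    have : P (⋃ n : ℕ, {ω | (-(n : ℝ)) < ζ 1 ω}) = 0 :=
      measure_iUnion_null fun n => hgt1 _ (hb ▸ bot_le)
    have huniv : (⋃ n : ℕ, {ω | (-(n : ℝ)) < ζ 1 ω}) = Set.univ := by
      ext ω
      simp only [Set.mem_iUnion, Set.mem_setOf_eq, Set.mem_univ, iff_true]
      obtain ⟨n, hn⟩ := exists_nat_gt (-(ζ 1 ω))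
      exact ⟨n, by linarith⟩
    rw [huniv, measure_univ] at this
    exact one_ne_zero this
  -- product formula
  have hprod : ∀ (q : ℝ) (n : ℕ),
      P (⋂ k ∈ Finset.Icc 1 n, {ω | ζ k ω < q}) = P {ω | ζ 1 ω < q} ^ n := by
    intro q n
    have := hindep.meas_biInter (S := Finset.Icc 1 n)
      (s := fun k => {ω | ζ k ω < q}) (fun i hi => ⟨Set.Iio q, measurableSet_Iio, rfl⟩)
    rw [this]
    have : ∀ k ∈ Finset.Icc 1 n, P {ω | ζ k ω < q} = P {ω | ζ 1 ω < q} := by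
      intro k hk
      exact hidIio k (Finset.mem_Icc.mp hk).1 q
    rw [Finset.prod_congr rfl this, Finset.prod_const, Nat.card_Icc, Nat.add_sub_cancel]
  -- if P(ζ₁ < q) < 1 then a.s. some ζ_k ≥ q
  have hinf : ∀ q : ℝ, P {ω | ζ 1 ω < q} < 1 → P {ω | ∀ k, 1 ≤ k → ζ k ω < q} = 0 := by
    intro q hq
    have hle : ∀ n : ℕ, P {ω | ∀ k, 1 ≤ k → ζ k ω < q} ≤ P {ω | ζ 1 ω < q} ^ n := by
      intro n
      rw [← hprod q n]
      apply measure_mono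
      intro ω hω
      simp only [Set.mem_iInter]
      intro k hk
      exact hω k (Finset.mem_Icc.mp hk).1
    have htend := ENNReal.tendsto_pow_atTop_nhds_zero_of_lt_one hq
    exact le_antisymm (ge_of_tendsto' htend (fun n => (hle n))) (zero_le)
  -- helpers turning measure-one / measure-zero statements into a.e. statements
  have hae_of_one : ∀ (j : ℕ) (x : ℝ), P {ω | ζ j ω ≤ x} = 1 → ∀ᵐ ω ∂P, ζ j ω ≤ x := by
    intro j x h
    rw [ae_iff]
    have hs : {ω | ¬ ζ j ω ≤ x} = {ω | ζ j ω ≤ x}ᶜ := rfl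
    rw [hs, prob_compl_eq_zero_iff (hIic j x)]
    exact h
  have hae_of_zero : ∀ (j : ℕ) (c : ℝ), P {ω | c ≤ ζ j ω} = 0 → ∀ᵐ ω ∂P, ζ j ω < c := by
    intro j c h
    rw [ae_iff]
    have hs : {ω | ¬ ζ j ω < c} = {ω | c ≤ ζ j ω} := by ext ω; simp [not_lt]
    rw [hs]
    exact h
  -- continuity from above : the limit statement is equivalent to P B = 0
  have hiff : Tendsto (fun n : ℕ => P {ω | ∀ k, 1 ≤ k → k ≤ n → ζ k ω < ζ 0 ω}) atTop (nhds 0)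
      ↔ P {ω | ∀ k, 1 ≤ k → ζ k ω < ζ 0 ω} = 0 := by
    set A : ℕ → Set Ω := fun n => {ω | ∀ k, 1 ≤ k → k ≤ n → ζ k ω < ζ 0 ω} with hA
    have hAmeas : ∀ n, MeasurableSet (A n) := by
      intro n
      have hrw : A n = ⋂ (k : ℕ) (_ : 1 ≤ k) (_ : k ≤ n), {ω | ζ k ω < ζ 0 ω} := by
        ext ω; simp [hA]
      rw [hrw]
      exact MeasurableSet.iInter fun k => MeasurableSet.iInter fun _ =>
        MeasurableSet.iInter fun _ => measurableSet_lt (hmeas k) (hmeas 0)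
    have hAanti : Antitone A := fun m n hmn ω hω k h1 h2 => hω k h1 (h2.trans hmn)
    have htendA : Tendsto (fun n => P (A n)) atTop (nhds (P (⋂ n, A n))) :=
      tendsto_measure_iInter_atTop (fun n => (hAmeas n).nullMeasurableSet) hAanti
        ⟨0, (measure_lt_top P _).ne⟩
    have hBset : (⋂ n, A n) = {ω | ∀ k, 1 ≤ k → ζ k ω < ζ 0 ω} := by
      ext ω
      simp only [Set.mem_iInter, Set.mem_setOf_eq, hA]
      constructor
      · intro h k hk; exact h k k hk le_rfl
      · intro h n k hk _; exact h k hk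
    rw [hBset] at htendA
    exact ⟨fun h => tendsto_nhds_unique htendA h, fun h => h ▸ htendA⟩
  rw [hiff]
  have hereal : ∀ x : EReal, x ≠ ⊥ → x = ⊤ ∨ ∃ c : ℝ, x = (c : EReal) := by
    intro x hx
    induction x using EReal.rec with
    | bot => exact absurd rfl hx
    | coe c => exact Or.inr ⟨c, rfl⟩
    | top => exact Or.inl rfl
  constructor
  · -- forward direction
    intro hB0
    constructor
    · -- x₀ ≤ x₁
      by_contra hlt
      push_neg at hlt
      obtain ⟨y, hy, hxy⟩ := lt_sSup_iff.mp (hx₀ ▸ hlt)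
      obtain ⟨x, rfl, hx⟩ := hy
      have h1x : P {ω | ζ 1 ω ≤ x} = 1 := hF1 x hxy
      have hae : ∀ᵐ ω ∂P, ∀ k, 1 ≤ k → ζ k ω ≤ x := by
        rw [ae_all_iff]
        intro k
        by_cases hk : 1 ≤ k
        · exact (hae_of_one k x ((hidIic k hk x).trans h1x)).mono fun ω h _ => h
        · exact Filter.Eventually.of_forall fun ω h => absurd h hk
      have hmono : P {ω | x < ζ 0 ω} ≤ P {ω | ∀ k, 1 ≤ k → ζ k ω < ζ 0 ω} := by
        refine measure_mono_ae (hae.mono fun ω hω hmem k hk => ?_)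
        exact lt_of_le_of_lt (hω k hk) hmem
      have hpos : 0 < P {ω | x < ζ 0 ω} := by
        have hs : {ω | x < ζ 0 ω} = {ω | ζ 0 ω ≤ x}ᶜ := by ext ω; simp [not_le]
        rw [hs, prob_compl_eq_one_sub (hIic 0 x)]
        exact tsub_pos_iff_lt.mpr hx
      rw [hB0] at hmono
      exact absurd (le_antisymm hmono (zero_le)) hpos.ne'
    · -- the implication about atoms
      intro h0
      have hx1top : x₁ ≠ ⊤ := by
        intro ht
        rw [ht] at h0
        have : {ω | (ζ 0 ω : EReal) = ⊤} = ∅ := by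
          ext ω; simp [EReal.coe_ne_top]
        rw [this] at h0
        simp at h0
      obtain htop | ⟨c, hc⟩ := hereal x₁ hbot
      · exact absurd htop hx1top
      subst hc
      have hset0 : {ω | (ζ 0 ω : EReal) = (c : EReal)} = {ω | ζ 0 ω = c} := by
        ext ω; simp [EReal.coe_eq_coe_iff]
      have hset1 : {ω | (ζ 1 ω : EReal) = (c : EReal)} = {ω | ζ 1 ω = c} := by
        ext ω; simp [EReal.coe_eq_coe_iff]
      rw [hset0] at h0
      rw [hset1]
      by_contra h1
      have hz : P {ω | ζ 1 ω = c} = 0 := by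
        simpa using (not_lt.mp h1)
      have hge : P {ω | c ≤ ζ 1 ω} = 0 := by
        have hsub : {ω | c ≤ ζ 1 ω} ⊆ {ω | c < ζ 1 ω} ∪ {ω | ζ 1 ω = c} := by
          intro ω hω
          simp only [Set.mem_setOf_eq] at hω ⊢
          rcases lt_or_eq_of_le hω with h | h
          · exact Or.inl h
          · exact Or.inr h.symm
        exact measure_mono_null hsub (measure_union_null (hgt1 c le_rfl) hz)
      have hae : ∀ᵐ ω ∂P, ∀ k, 1 ≤ k → ζ k ω < c := by
        rw [ae_all_iff]
        intro k
        by_cases hk : 1 ≤ k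
        · exact (hae_of_zero k c ((hidIci k hk c).trans hge)).mono fun ω h _ => h
        · exact Filter.Eventually.of_forall fun ω h => absurd h hk
      have hmono : P {ω | ζ 0 ω = c} ≤ P {ω | ∀ k, 1 ≤ k → ζ k ω < ζ 0 ω} := by
        refine measure_mono_ae (hae.mono fun ω hω hmem k hk => ?_)
        exact lt_of_lt_of_le (hω k hk) (le_of_eq hmem.symm)
      rw [hB0] at hmono
      exact absurd (le_antisymm hmono (zero_le)) h0.ne'
  · -- backward direction
    rintro ⟨hle, himp⟩
    obtain htop | ⟨c, hc⟩ := hereal x₁ hbot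
    · -- x₁ = ⊤
      have hsub : {ω | ∀ k, 1 ≤ k → ζ k ω < ζ 0 ω} ⊆
          ⋃ q : ℚ, {ω | ∀ k, 1 ≤ k → ζ k ω < (q : ℝ)} := by
        intro ω hω
        obtain ⟨q, hq⟩ := exists_rat_gt (ζ 0 ω)
        exact Set.mem_iUnion.2 ⟨q, fun k hk => lt_trans (hω k hk) hq⟩
      refine measure_mono_null hsub (measure_iUnion_null fun q => hinf q ?_)
      have hm : P {ω | ζ 1 ω < (q : ℝ)} ≤ P {ω | ζ 1 ω ≤ (q : ℝ)} :=
        measure_mono fun ω (h : ζ 1 ω < (q : ℝ)) => le_of_lt h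
      refine lt_of_le_of_lt hm (hF2 q ?_)
      rw [htop]
      exact EReal.coe_lt_top _
    · -- x₁ = c real
      subst hc
      have hgtc : P {ω | c < ζ 0 ω} = 0 := hgt0 c hle
      by_cases hz : P {ω | ζ 1 ω = c} = 0
      · -- no atom for ζ₁ at c, so no atom for ζ₀ at c either
        have h0c : P {ω | ζ 0 ω = c} = 0 := by
          by_contra h
          have hpos : 0 < P {ω | (ζ 0 ω : EReal) = (c : EReal)} := by
            have hset0 : {ω | (ζ 0 ω : EReal) = (c : EReal)} = {ω | ζ 0 ω = c} := by
              ext ω; simp [EReal.coe_eq_coe_iff]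
            rw [hset0]
            exact pos_iff_ne_zero.mpr h
          have := himp hpos
          have hset1 : {ω | (ζ 1 ω : EReal) = (c : EReal)} = {ω | ζ 1 ω = c} := by
            ext ω; simp [EReal.coe_eq_coe_iff]
          rw [hset1] at this
          exact absurd hz this.ne'
        have hsub : {ω | ∀ k, 1 ≤ k → ζ k ω < ζ 0 ω} ⊆
            ({ω | c < ζ 0 ω} ∪ {ω | ζ 0 ω = c}) ∪
              ⋃ (q : ℚ) (_ : (q : ℝ) < c), {ω | ∀ k, 1 ≤ k → ζ k ω < (q : ℝ)} := by
          intro ω hω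
          rcases lt_trichotomy (ζ 0 ω) c with h | h | h
          · obtain ⟨q, hq1, hq2⟩ := exists_rat_btwn h
            refine Or.inr (Set.mem_iUnion.2 ⟨q, Set.mem_iUnion.2 ⟨hq2, fun k hk => ?_⟩⟩)
            exact lt_trans (hω k hk) hq1
          · exact Or.inl (Or.inr h)
          · exact Or.inl (Or.inl h)
        refine measure_mono_null hsub
          (measure_union_null (measure_union_null hgtc h0c)
            (measure_iUnion_null fun q => measure_iUnion_null fun hq => hinf q ?_))
        have hm : P {ω | ζ 1 ω < (q : ℝ)} ≤ P {ω | ζ 1 ω ≤ (q : ℝ)} :=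
          measure_mono fun ω (h : ζ 1 ω < (q : ℝ)) => le_of_lt h
        exact lt_of_le_of_lt hm (hF2 q (EReal.coe_lt_coe_iff.mpr hq))
      · -- ζ₁ has an atom at c
        have hlt1 : P {ω | ζ 1 ω < c} < 1 := by
          have hdisj : Disjoint {ω | ζ 1 ω < c} {ω | ζ 1 ω = c} := by
            rw [Set.disjoint_left]
            intro ω h1 h2
            simp only [Set.mem_setOf_eq] at h1 h2
            exact absurd h2 (ne_of_lt h1)
          have hmeq : MeasurableSet {ω | ζ 1 ω = c} := (hmeas 1) (measurableSet_singleton c)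
          have hun : P ({ω | ζ 1 ω < c} ∪ {ω | ζ 1 ω = c})
              = P {ω | ζ 1 ω < c} + P {ω | ζ 1 ω = c} := measure_union hdisj hmeq
          have hle1 : P {ω | ζ 1 ω < c} + P {ω | ζ 1 ω = c} ≤ 1 := hun ▸ prob_le_one
          calc P {ω | ζ 1 ω < c}
              < P {ω | ζ 1 ω < c} + P {ω | ζ 1 ω = c} :=
                ENNReal.lt_add_right (measure_lt_top P _).ne hz
            _ ≤ 1 := hle1
        have hsub : {ω | ∀ k, 1 ≤ k → ζ k ω < ζ 0 ω} ⊆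
            {ω | c < ζ 0 ω} ∪ {ω | ∀ k, 1 ≤ k → ζ k ω < c} := by
          intro ω hω
          rcases lt_or_ge c (ζ 0 ω) with h | h
          · exact Or.inl h
          · exact Or.inr fun k hk => lt_of_lt_of_le (hω k hk) h
        exact measure_mono_null hsub (measure_union_null hgtc (hinf c hlt1))
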